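/- Let r, c ∈ Δ_n and F ∈ ℝ₊^{n×n}. Define F' = XF where X is diagonal with Xᵢᵢ = min(rᵢ/rᵢ(F), 1), F'' = F'Y where Y is diagonal with Yⱼⱼ = min(cⱼ/cⱼ(F'), 1), err_r = r − r(F''), err_c = c − c(F''), and G = F'' + err_r err_cᵀ/‖err_r‖₁. Then G has nonnegative entries, row sums r, and column sums c, and ‖G − F‖₁ ≤ 2(‖r(F) − r‖₁ + ‖c(F) − c‖₁). -/

import Mathlib

/-- Rounding guarantee (Lemma 7): the output `G` of `round(F, U_{r,c})` lies in the
transport polytope `U_{r,c}` and satisfies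
`‖G − F‖₁ ≤ 2(‖r(F) − r‖₁ + ‖c(F) − c‖₁)`. -/
theorem round_guarantee (n : ℕ) (r c : Fin n → ℝ) (F F' F'' G : Fin n → Fin n → ℝ)
    (err_r err_c : Fin n → ℝ)
    (hr0 : ∀ i, 0 ≤ r i) (hr1 : ∑ i, r i = 1)
    (hc0 : ∀ j, 0 ≤ c j) (hc1 : ∑ j, c j = 1)
    (hF : ∀ i j, 0 ≤ F i j)
    (hF' : ∀ i j, F' i j = min (r i / ∑ j', F i j') 1 * F i j)
    (hF'' : ∀ i j, F'' i j = F' i j * min (c j / ∑ i', F' i' j) 1)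
    (herr_r : ∀ i, err_r i = r i - ∑ j, F'' i j)
    (herr_c : ∀ j, err_c j = c j - ∑ i, F'' i j)
    (hpos : 0 < ∑ i, |err_r i|)
    (hG : ∀ i j, G i j = F'' i j + err_r i * err_c j / ∑ i', |err_r i'|) :
    (∀ i j, 0 ≤ G i j) ∧ (∀ i, ∑ j, G i j = r i) ∧ (∀ j, ∑ i, G i j = c j) ∧
      ∑ i, ∑ j, |G i j - F i j| ≤
        2 * ((∑ i, |(∑ j, F i j) - r i|) + ∑ j, |(∑ i, F i j) - c j|) := by
  have hsne : (∑ i, |err_r i|) ≠ 0 := ne_of_gt hpos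
  have hF'0 : ∀ i j, 0 ≤ F' i j := fun i j => by
    rw [hF']
    exact mul_nonneg (le_min (div_nonneg (hr0 i)
      (Finset.sum_nonneg fun j' _ => hF i j')) zero_le_one) (hF i j)
  have hF'le : ∀ i j, F' i j ≤ F i j := fun i j => by
    rw [hF']; exact mul_le_of_le_one_left (hF i j) (min_le_right _ _)
  have hF''0 : ∀ i j, 0 ≤ F'' i j := fun i j => by
    rw [hF'']
    exact mul_nonneg (hF'0 i j) (le_min (div_nonneg (hc0 j)
      (Finset.sum_nonneg fun i' _ => hF'0 i' j)) zero_le_one)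
  have hF''le : ∀ i j, F'' i j ≤ F' i j := fun i j => by
    rw [hF'']; exact mul_le_of_le_one_right (hF'0 i j) (min_le_right _ _)
  have hrowF' : ∀ i, ∑ j, F' i j = min (r i) (∑ j, F i j) := by
    intro i
    have hS : 0 ≤ ∑ j, F i j := Finset.sum_nonneg fun j _ => hF i j
    rcases hS.eq_or_lt with h | h
    · have hz : ∀ j, F i j = 0 := fun j =>
        (Finset.sum_eq_zero_iff_of_nonneg (fun j _ => hF i j)).mp h.symm j (Finset.mem_univ j)
      simp [hF', hz, min_eq_right (hr0 i)]
    · simp only [hF', ← Finset.mul_sum]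
      rcases le_total (r i) (∑ j, F i j) with hle | hle
      · rw [min_eq_left ((div_le_one h).mpr hle), div_mul_cancel₀ _ (ne_of_gt h),
          min_eq_left hle]
      · rw [min_eq_right ((one_le_div h).mpr hle), one_mul, min_eq_right hle]
  have hcolF'' : ∀ j, ∑ i, F'' i j = min (c j) (∑ i, F' i j) := by
    intro j
    have hS : 0 ≤ ∑ i, F' i j := Finset.sum_nonneg fun i _ => hF'0 i j
    rcases hS.eq_or_lt with h | h
    · have hz : ∀ i, F' i j = 0 := fun i =>
        (Finset.sum_eq_zero_iff_of_nonneg (fun i _ => hF'0 i j)).mp h.symm i (Finset.mem_univ i)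
      simp [hF'', hz, min_eq_right (hc0 j)]
    · simp only [hF'', ← Finset.sum_mul]
      rw [mul_comm]
      rcases le_total (c j) (∑ i, F' i j) with hle | hle
      · rw [min_eq_left ((div_le_one h).mpr hle), div_mul_cancel₀ _ (ne_of_gt h),
          min_eq_left hle]
      · rw [min_eq_right ((one_le_div h).mpr hle), one_mul, min_eq_right hle]
  have hrowF''_le : ∀ i, ∑ j, F'' i j ≤ ∑ j, F' i j := fun i =>
    Finset.sum_le_sum fun j _ => hF''le i j
  have herr_r0 : ∀ i, 0 ≤ err_r i := by
    intro i
    rw [herr_r]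
    have h1 : ∑ j, F'' i j ≤ r i := by
      have := (hrowF''_le i).trans_eq (hrowF' i)
      exact this.trans (min_le_left _ _)
    linarith
  have herr_c0 : ∀ j, 0 ≤ err_c j := by
    intro j
    rw [herr_c]
    have h1 : ∑ i, F'' i j ≤ c j := (hcolF'' j).le.trans (min_le_left _ _)
    linarith
  have hs_eq : ∑ i, |err_r i| = ∑ i, err_r i :=
    Finset.sum_congr rfl fun i _ => abs_of_nonneg (herr_r0 i)
  have hsum_err : ∑ j, err_c j = ∑ i, err_r i := by
    simp only [herr_r, herr_c, Finset.sum_sub_distrib, hr1, hc1]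
    rw [Finset.sum_comm]
  have hGrow : ∀ i, ∑ j, G i j = r i := by
    intro i
    have h1 : ∑ j, err_r i * err_c j / (∑ i', |err_r i'|) = err_r i := by
      calc ∑ j, err_r i * err_c j / (∑ i', |err_r i'|)
          = (err_r i / ∑ i', |err_r i'|) * ∑ j, err_c j := by
            rw [Finset.mul_sum]; exact Finset.sum_congr rfl fun j _ => by ring
        _ = err_r i := by rw [hsum_err, ← hs_eq, div_mul_cancel₀ _ hsne]
    simp only [hG, Finset.sum_add_distrib, h1]
    linarith [herr_r i]
  have hGcol : ∀ j, ∑ i, G i j = c j := by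
    intro j
    have h1 : ∑ i, err_r i * err_c j / (∑ i', |err_r i'|) = err_c j := by
      calc ∑ i, err_r i * err_c j / (∑ i', |err_r i'|)
          = (err_c j / ∑ i', |err_r i'|) * ∑ i, err_r i := by
            rw [Finset.mul_sum]; exact Finset.sum_congr rfl fun i _ => by ring
        _ = err_c j := by rw [← hs_eq, div_mul_cancel₀ _ hsne]
    simp only [hG, Finset.sum_add_distrib, h1]
    linarith [herr_c j]
  have hG0 : ∀ i j, 0 ≤ G i j := fun i j => by
    rw [hG]
    exact add_nonneg (hF''0 i j)
      (div_nonneg (mul_nonneg (herr_r0 i) (herr_c0 j)) hpos.le)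
  refine ⟨hG0, hGrow, hGcol, ?_⟩
  -- the ℓ¹ bound
  have hGge : ∀ i j, F'' i j ≤ G i j := fun i j => by
    rw [hG]
    have : 0 ≤ err_r i * err_c j / (∑ i', |err_r i'|) :=
      div_nonneg (mul_nonneg (herr_r0 i) (herr_c0 j)) hpos.le
    linarith
  have habs : ∀ i j, |G i j - F i j| ≤ (F i j - F'' i j) + (G i j - F'' i j) := by
    intro i j
    have h1 : F'' i j ≤ F i j := (hF''le i j).trans (hF'le i j)
    have h2 := hGge i j
    rcases abs_cases (G i j - F i j) with ⟨h, _⟩ | ⟨h, _⟩ <;> linarith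
  have hT2 : ∑ i, ((∑ j, F' i j) - ∑ j, F'' i j) = ∑ j, ∑ i, (F' i j - F'' i j) := by
    rw [Finset.sum_comm]
    exact Finset.sum_congr rfl fun i _ => (Finset.sum_sub_distrib ..).symm
  have key1 : ∑ i, ∑ j, (F i j - F' i j) ≤ ∑ i, |(∑ j, F i j) - r i| := by
    apply Finset.sum_le_sum
    intro i _
    rw [Finset.sum_sub_distrib, hrowF' i]
    rcases le_total (r i) (∑ j, F i j) with h | h
    · rw [min_eq_left h]; exact le_abs_self _
    · rw [min_eq_right h]; simpa using abs_nonneg ((∑ j, F i j) - r i)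
  have key2 : ∑ j, ∑ i, (F' i j - F'' i j) ≤ ∑ j, |(∑ i, F i j) - c j| := by
    apply Finset.sum_le_sum
    intro j _
    rw [Finset.sum_sub_distrib, hcolF'' j]
    have hC : ∑ i, F' i j ≤ ∑ i, F i j := Finset.sum_le_sum fun i _ => hF'le i j
    rcases le_total (c j) (∑ i, F' i j) with h | h
    · rw [min_eq_left h]
      have := le_abs_self ((∑ i, F i j) - c j)
      linarith
    · rw [min_eq_right h]; simpa using abs_nonneg ((∑ i, F i j) - c j)
  have key3a : ∑ i, (r i - ∑ j, F'' i j)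
      = (∑ i, (r i - min (r i) (∑ j, F i j))) + ∑ j, ∑ i, (F' i j - F'' i j) := by
    rw [← hT2, ← Finset.sum_add_distrib]
    refine Finset.sum_congr rfl fun i _ => ?_
    rw [← hrowF' i]; ring
  have key3b : ∑ i, (r i - min (r i) (∑ j, F i j)) ≤ ∑ i, |(∑ j, F i j) - r i| := by
    apply Finset.sum_le_sum
    intro i _
    rcases le_total (r i) (∑ j, F i j) with h | h
    · rw [min_eq_left h]; simpa using abs_nonneg ((∑ j, F i j) - r i)
    · rw [min_eq_right h, abs_sub_comm]; exact le_abs_self _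
  have main : ∑ i, ∑ j, |G i j - F i j| ≤
      (∑ i, ∑ j, (F i j - F' i j)) + (∑ j, ∑ i, (F' i j - F'' i j))
        + (∑ i, (r i - ∑ j, F'' i j)) := by
    have h1 : ∑ i, ∑ j, |G i j - F i j|
        ≤ ∑ i, ∑ j, ((F i j - F'' i j) + (G i j - F'' i j)) :=
      Finset.sum_le_sum fun i _ => Finset.sum_le_sum fun j _ => habs i j
    refine h1.trans_eq ?_
    simp only [Finset.sum_add_distrib, Finset.sum_sub_distrib, hGrow]
    rw [Finset.sum_comm (f := fun i j => F' i j), Finset.sum_comm (f := fun i j => F'' i j)]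
    ring
  linarith [main, key1, key2, key3a, key3b]
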